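/- arXiv:2301.05005 — 5 statements merged into one kernel-verified Lean document; each statement's English description precedes it below -/
import Mathlib

section
/- Let l, m, n be natural numbers, let L be an l×m complex matrix and R an l×n complex matrix. Then for every m×n complex matrix A one has ‖(Lᴴ R) ∘ A‖_∞ ≤ ‖L‖_c · ‖R‖_c · ‖A‖_∞, i.e. the Schur multiplier S_{LᴴR} has operator norm at most ‖L‖_c‖R‖_c. -/
open Matrix BigOperators

/-- The ℓ²→ℓ² operator norm of a complex matrix. -/
noncomputable def opNorm {m n : ℕ} (A : Matrix (Fin m) (Fin n) ℂ) : ℝ :=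
  ‖(Matrix.toEuclideanLin A).toContinuousLinearMap‖

/-- The column norm: the maximum Euclidean norm of a column. -/
noncomputable def colNorm {l m : ℕ} (L : Matrix (Fin l) (Fin m) ℂ) : ℝ :=
  ⨆ j : Fin m, Real.sqrt (∑ i, ‖L i j‖ ^ 2)

lemma colNorm_nonneg {l m : ℕ} (L : Matrix (Fin l) (Fin m) ℂ) : 0 ≤ colNorm L :=
  Real.iSup_nonneg fun _ => Real.sqrt_nonneg _

lemma sum_sq_col_le {l m : ℕ} (L : Matrix (Fin l) (Fin m) ℂ) (j : Fin m) :
    ∑ i, ‖L i j‖ ^ 2 ≤ colNorm L ^ 2 := by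
  have h1 : Real.sqrt (∑ i, ‖L i j‖ ^ 2) ≤ colNorm L :=
    le_ciSup (f := fun j : Fin m => Real.sqrt (∑ i, ‖L i j‖ ^ 2))
      (Set.Finite.bddAbove (Set.finite_range _)) j
  have h2 : 0 ≤ ∑ i, ‖L i j‖ ^ 2 := Finset.sum_nonneg fun _ _ => sq_nonneg _
  calc ∑ i, ‖L i j‖ ^ 2 = Real.sqrt (∑ i, ‖L i j‖ ^ 2) ^ 2 := (Real.sq_sqrt h2).symm
    _ ≤ colNorm L ^ 2 := pow_le_pow_left₀ (Real.sqrt_nonneg _) h1 2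

theorem schur_multiplier_norm_le_colNorm_mul_colNorm
    (l m n : ℕ) (L : Matrix (Fin l) (Fin m) ℂ) (R : Matrix (Fin l) (Fin n) ℂ)
    (A : Matrix (Fin m) (Fin n) ℂ) :
    opNorm (Matrix.hadamard (Lᴴ * R) A) ≤ colNorm L * colNorm R * opNorm A := by
  set M := Matrix.hadamard (Lᴴ * R) A with hM
  have hLn := colNorm_nonneg L
  have hRn := colNorm_nonneg R
  have hAn : 0 ≤ opNorm A := norm_nonneg _
  have hC : 0 ≤ colNorm L * colNorm R * opNorm A := by positivity
  refine ContinuousLinearMap.opNorm_le_bound _ hC fun v => ?_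
  -- the auxiliary vectors
  set u : Fin l → EuclideanSpace ℂ (Fin n) := fun k => WithLp.toLp 2 (fun j => R k j * v j) with hu
  set w : Fin l → EuclideanSpace ℂ (Fin m) :=
    fun k => Matrix.toEuclideanLin A (u k) with hw
  -- pointwise formula
  have key : ∀ i : Fin m, (Matrix.toEuclideanLin M).toContinuousLinearMap v i
      = ∑ k, (starRingEnd ℂ) (L k i) * w k i := by
    intro i
    show M.mulVec (fun j => v j) i = _
    have : ∀ k, w k i = ∑ j, A i j * (R k j * v j) := fun k => rfl
    simp only [this, Matrix.mulVec, dotProduct, hM, Matrix.hadamard_apply,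
      Matrix.mul_apply, Matrix.conjTranspose_apply, Finset.mul_sum, Finset.sum_mul]
    rw [Finset.sum_comm]
    refine Finset.sum_congr rfl fun k _ => Finset.sum_congr rfl fun j _ => ?_
    simp only [starRingEnd_apply]; ring
  -- Cauchy–Schwarz at each row i
  have cs : ∀ i : Fin m, ‖(Matrix.toEuclideanLin M).toContinuousLinearMap v i‖ ^ 2
      ≤ colNorm L ^ 2 * ∑ k, ‖w k i‖ ^ 2 := by
    intro i
    set a : EuclideanSpace ℂ (Fin l) := WithLp.toLp 2 (fun k => L k i) with ha
    set b : EuclideanSpace ℂ (Fin l) := WithLp.toLp 2 (fun k => w k i) with hb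
    have hinner : (inner ℂ a b : ℂ) = ∑ k, (starRingEnd ℂ) (L k i) * w k i := by
      simp [PiLp.inner_apply, RCLike.inner_apply, ha, hb, mul_comm]
    have hcs : ‖(inner ℂ a b : ℂ)‖ ≤ ‖a‖ * ‖b‖ := norm_inner_le_norm a b
    have hna : ‖a‖ ^ 2 = ∑ k, ‖L k i‖ ^ 2 := by
      rw [EuclideanSpace.norm_eq, Real.sq_sqrt (Finset.sum_nonneg fun _ _ => sq_nonneg _)]
    have hnb : ‖b‖ ^ 2 = ∑ k, ‖w k i‖ ^ 2 := by
      rw [EuclideanSpace.norm_eq, Real.sq_sqrt (Finset.sum_nonneg fun _ _ => sq_nonneg _)]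
    calc ‖(Matrix.toEuclideanLin M).toContinuousLinearMap v i‖ ^ 2
        = ‖(inner ℂ a b : ℂ)‖ ^ 2 := by rw [key i, hinner]
      _ ≤ (‖a‖ * ‖b‖) ^ 2 := pow_le_pow_left₀ (norm_nonneg _) hcs 2
      _ = ‖a‖ ^ 2 * ‖b‖ ^ 2 := by ring
      _ = (∑ k, ‖L k i‖ ^ 2) * ∑ k, ‖w k i‖ ^ 2 := by rw [hna, hnb]
      _ ≤ colNorm L ^ 2 * ∑ k, ‖w k i‖ ^ 2 := by
          exact mul_le_mul_of_nonneg_right (sum_sq_col_le L i)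
            (Finset.sum_nonneg fun _ _ => sq_nonneg _)
  -- norm of w k
  have hwk : ∀ k, ∑ i, ‖w k i‖ ^ 2 ≤ opNorm A ^ 2 * ∑ j, ‖R k j * v j‖ ^ 2 := by
    intro k
    have h1 : ‖w k‖ ≤ opNorm A * ‖u k‖ := by
      have := (Matrix.toEuclideanLin A).toContinuousLinearMap.le_opNorm (u k)
      simpa [LinearMap.coe_toContinuousLinearMap', hw, opNorm] using this
    have h2 : ‖w k‖ ^ 2 ≤ (opNorm A * ‖u k‖) ^ 2 := pow_le_pow_left₀ (norm_nonneg _) h1 2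
    have h3 : ‖w k‖ ^ 2 = ∑ i, ‖w k i‖ ^ 2 := by
      rw [EuclideanSpace.norm_eq, Real.sq_sqrt (Finset.sum_nonneg fun _ _ => sq_nonneg _)]
    have h4 : ‖u k‖ ^ 2 = ∑ j, ‖R k j * v j‖ ^ 2 := by
      rw [EuclideanSpace.norm_eq, Real.sq_sqrt (Finset.sum_nonneg fun _ _ => sq_nonneg _)]
    calc ∑ i, ‖w k i‖ ^ 2 = ‖w k‖ ^ 2 := h3.symm
      _ ≤ (opNorm A * ‖u k‖) ^ 2 := h2
      _ = opNorm A ^ 2 * ‖u k‖ ^ 2 := by ring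
      _ = opNorm A ^ 2 * ∑ j, ‖R k j * v j‖ ^ 2 := by rw [h4]
  -- sum over k of ‖u k‖²
  have hsumu : ∑ k, ∑ j, ‖R k j * v j‖ ^ 2 ≤ colNorm R ^ 2 * ‖v‖ ^ 2 := by
    have hv : ‖v‖ ^ 2 = ∑ j, ‖v j‖ ^ 2 := by
      rw [EuclideanSpace.norm_eq, Real.sq_sqrt (Finset.sum_nonneg fun _ _ => sq_nonneg _)]
    rw [Finset.sum_comm, hv, Finset.mul_sum]
    refine Finset.sum_le_sum fun j _ => ?_
    calc ∑ k, ‖R k j * v j‖ ^ 2 = (∑ k, ‖R k j‖ ^ 2) * ‖v j‖ ^ 2 := by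
          rw [Finset.sum_mul]; congr 1; ext k; rw [norm_mul]; ring
      _ ≤ colNorm R ^ 2 * ‖v j‖ ^ 2 :=
          mul_le_mul_of_nonneg_right (sum_sq_col_le R j) (sq_nonneg _)
  -- put everything together, on squares
  have main : ‖(Matrix.toEuclideanLin M).toContinuousLinearMap v‖ ^ 2
      ≤ (colNorm L * colNorm R * opNorm A * ‖v‖) ^ 2 := by
    have hT : ‖(Matrix.toEuclideanLin M).toContinuousLinearMap v‖ ^ 2
        = ∑ i, ‖(Matrix.toEuclideanLin M).toContinuousLinearMap v i‖ ^ 2 := by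
      rw [EuclideanSpace.norm_eq, Real.sq_sqrt (Finset.sum_nonneg fun _ _ => sq_nonneg _)]
    calc ‖(Matrix.toEuclideanLin M).toContinuousLinearMap v‖ ^ 2
        = ∑ i, ‖(Matrix.toEuclideanLin M).toContinuousLinearMap v i‖ ^ 2 := hT
      _ ≤ ∑ i, colNorm L ^ 2 * ∑ k, ‖w k i‖ ^ 2 := Finset.sum_le_sum fun i _ => cs i
      _ = colNorm L ^ 2 * ∑ k, ∑ i, ‖w k i‖ ^ 2 := by
          rw [← Finset.mul_sum, Finset.sum_comm]
      _ ≤ colNorm L ^ 2 * ∑ k, opNorm A ^ 2 * ∑ j, ‖R k j * v j‖ ^ 2 :=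
          mul_le_mul_of_nonneg_left (Finset.sum_le_sum fun k _ => hwk k) (sq_nonneg _)
      _ = colNorm L ^ 2 * (opNorm A ^ 2 * ∑ k, ∑ j, ‖R k j * v j‖ ^ 2) := by
          rw [← Finset.mul_sum]
      _ ≤ colNorm L ^ 2 * (opNorm A ^ 2 * (colNorm R ^ 2 * ‖v‖ ^ 2)) := by
          apply mul_le_mul_of_nonneg_left _ (sq_nonneg _)
          exact mul_le_mul_of_nonneg_left hsumu (sq_nonneg _)
      _ = (colNorm L * colNorm R * opNorm A * ‖v‖) ^ 2 := by ring
  have := Real.sqrt_le_sqrt main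
  rw [Real.sqrt_sq (norm_nonneg _), Real.sqrt_sq (by positivity)] at this
  simpa [opNorm] using this
end

section
/- Let X be a Hermitian n×n complex matrix and let |X| denote the positive semidefinite square root of XᴴX. Then for every n×n complex matrix A one has ‖X ∘ A‖_∞ ≤ (max_{1≤i≤n} |X|_{ii}) · ‖A‖_∞. -/
open Matrix BigOperators
open scoped ComplexOrder

/-- The positive semidefinite square root of a positive semidefinite matrix
(the definition of `Matrix.PosSemidef.sqrt` in Mathlib of December 2024, since removed). -/
noncomputable def Matrix.PosSemidef.sqrt {n : Type*} [Fintype n] [DecidableEq n] {𝕜 : Type*}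
    [RCLike 𝕜] {A : Matrix n n 𝕜} (hA : A.PosSemidef) : Matrix n n 𝕜 :=
  hA.1.eigenvectorUnitary.1 * diagonal ((↑) ∘ (√·) ∘ hA.1.eigenvalues) *
  (star hA.1.eigenvectorUnitary : Matrix n n 𝕜)

section DavisAux
open scoped Matrix.Norms.L2Operator
variable {n : ℕ}

private lemma spectral_entry (X : Matrix (Fin n) (Fin n) ℂ) (hX : X.IsHermitian) (i j : Fin n) :
    X i j = ∑ k, (hX.eigenvalues k : ℂ) *
      ((hX.eigenvectorUnitary : Matrix (Fin n) (Fin n) ℂ) i k *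
        (starRingEnd ℂ) ((hX.eigenvectorUnitary : Matrix (Fin n) (Fin n) ℂ) j k)) := by
  conv_lhs => rw [hX.spectral_theorem, Unitary.conjStarAlgAut_apply]
  simp only [Matrix.mul_apply, Matrix.diagonal_apply, Function.comp_apply, ite_mul, zero_mul,
    Finset.sum_ite_eq, Finset.mem_univ, if_true, Matrix.star_apply]
  refine Finset.sum_congr rfl fun k _ => ?_
  simp [Matrix.mul_apply, Matrix.diagonal_apply, Finset.sum_ite_eq, Finset.mul_sum]
  ring

open scoped MatrixOrder in
private lemma sqrt_formula (X : Matrix (Fin n) (Fin n) ℂ) (hX : X.IsHermitian) :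
    (Matrix.posSemidef_conjTranspose_mul_self X).sqrt =
      (hX.eigenvectorUnitary : Matrix (Fin n) (Fin n) ℂ) *
        diagonal (fun k => ((|hX.eigenvalues k| : ℝ) : ℂ)) *
        star (hX.eigenvectorUnitary : Matrix (Fin n) (Fin n) ℂ) := by
  set U : Matrix (Fin n) (Fin n) ℂ := (hX.eigenvectorUnitary : Matrix (Fin n) (Fin n) ℂ)
  have hU : star U * U = 1 := Matrix.mem_unitaryGroup_iff'.mp hX.eigenvectorUnitary.2
  have hdiag : Matrix.PosSemidef (diagonal (fun k => ((|hX.eigenvalues k| : ℝ) : ℂ))) := by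
    refine Matrix.posSemidef_diagonal_iff.mpr fun k => ?_
    rw [Complex.zero_le_real]
    exact abs_nonneg _
  have hB : Matrix.PosSemidef (U * diagonal (fun k => ((|hX.eigenvalues k| : ℝ) : ℂ)) * star U) := by
    simpa [Matrix.star_eq_conjTranspose] using hdiag.mul_mul_conjTranspose_same U
  have hsq : (Matrix.posSemidef_conjTranspose_mul_self X).sqrt = CFC.sqrt (Xᴴ * X) := by
    rw [CFC.sqrt_eq_real_sqrt _ (Matrix.posSemidef_conjTranspose_mul_self X).nonneg, cfcₙ_eq_cfc,
      (Matrix.posSemidef_conjTranspose_mul_self X).1.cfc_eq, IsHermitian.cfc,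
      Unitary.conjStarAlgAut_apply, Matrix.PosSemidef.sqrt]
  rw [hsq]
  refine CFC.sqrt_unique ?_ hB.nonneg
  rw [← pow_two]
  have hX2 : Xᴴ * X = U * diagonal (fun k => ((hX.eigenvalues k : ℂ) * (hX.eigenvalues k : ℂ))) * star U := by
    conv_lhs => rw [(hX : Xᴴ = X)]
    conv_lhs => rw [hX.spectral_theorem, Unitary.conjStarAlgAut_apply]
    simp only [Matrix.mul_assoc]
    rw [← Matrix.mul_assoc (star U) U, hU, Matrix.one_mul,
      ← Matrix.mul_assoc (diagonal _), Matrix.diagonal_mul_diagonal]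
    simp [Function.comp, Matrix.mul_assoc]
    rfl
  rw [pow_two, hX2]
  simp only [Matrix.mul_assoc]
  rw [← Matrix.mul_assoc (star U) U, hU, Matrix.one_mul, ← Matrix.mul_assoc (diagonal _),
    Matrix.diagonal_mul_diagonal]
  have h : (fun i => ((|hX.eigenvalues i| : ℝ) : ℂ) * ((|hX.eigenvalues i| : ℝ) : ℂ))
      = fun k => ((hX.eigenvalues k : ℂ) * (hX.eigenvalues k : ℂ)) := by
    funext k
    rw [← Complex.ofReal_mul, abs_mul_abs_self, Complex.ofReal_mul]
  rw [h]

private lemma diag_re (X : Matrix (Fin n) (Fin n) ℂ) (hX : X.IsHermitian) (i : Fin n) :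
    ((Matrix.posSemidef_conjTranspose_mul_self X).sqrt i i).re
      = ∑ k, |hX.eigenvalues k| * ‖(hX.eigenvectorUnitary : Matrix (Fin n) (Fin n) ℂ) i k‖^2 := by
  rw [sqrt_formula X hX, Matrix.mul_apply, Complex.re_sum]
  refine Finset.sum_congr rfl fun k _ => ?_
  rw [Matrix.mul_diagonal, Matrix.star_apply, mul_right_comm, Complex.star_def, Complex.mul_conj]
  rw [← Complex.ofReal_mul, Complex.ofReal_re, Complex.normSq_eq_norm_sq]
  ring

private lemma csup_nonneg (X : Matrix (Fin n) (Fin n) ℂ) (hX : X.IsHermitian) :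
    0 ≤ ⨆ i : Fin n, ((Matrix.posSemidef_conjTranspose_mul_self X).sqrt i i).re := by
  rcases isEmpty_or_nonempty (Fin n) with h | h
  · rw [Real.iSup_of_isEmpty]
  · obtain ⟨i⟩ := h
    refine le_trans ?_ (le_ciSup (Set.Finite.bddAbove (Set.finite_range _)) i)
    rw [diag_re X hX i]
    exact Finset.sum_nonneg fun k _ => by positivity

private lemma key_bound (X : Matrix (Fin n) (Fin n) ℂ) (hX : X.IsHermitian)
    (A : Matrix (Fin n) (Fin n) ℂ) (y x : EuclideanSpace ℂ (Fin n)) :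
    ‖∑ i, ∑ j, (starRingEnd ℂ) (y i) * ((X.hadamard A) i j * x j)‖ ≤
      (⨆ i : Fin n, ((Matrix.posSemidef_conjTranspose_mul_self X).sqrt i i).re)
        * ‖A‖ * (‖y‖ * ‖x‖) := by
  set C := ⨆ i : Fin n, ((Matrix.posSemidef_conjTranspose_mul_self X).sqrt i i).re with hC
  have hC0 : 0 ≤ C := csup_nonneg X hX
  set U : Matrix (Fin n) (Fin n) ℂ := (hX.eigenvectorUnitary : Matrix (Fin n) (Fin n) ℂ) with hUdef
  set lam := hX.eigenvalues with hlam
  set xk : Fin n → EuclideanSpace ℂ (Fin n) :=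
    fun k => (WithLp.equiv 2 (Fin n → ℂ)).symm (fun j => (starRingEnd ℂ) (U j k) * x j) with hxk
  set yk : Fin n → EuclideanSpace ℂ (Fin n) :=
    fun k => (WithLp.equiv 2 (Fin n → ℂ)).symm (fun i => (starRingEnd ℂ) (U i k) * y i) with hyk
  -- Step 1: rewrite the pairing using the spectral decomposition
  have hR : ∀ k, (inner ℂ (yk k) ((WithLp.equiv 2 (Fin n → ℂ)).symm (A *ᵥ (xk k))) : ℂ)
      = ∑ i, ∑ j, (U i k * (starRingEnd ℂ) (y i)) * (A i j * ((starRingEnd ℂ) (U j k) * x j)) := by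
    intro k
    simp only [PiLp.inner_apply, hyk, hxk, WithLp.equiv_symm_apply, PiLp.toLp_apply,
      Matrix.mulVec, dotProduct, RCLike.inner_apply,
      _root_.map_mul, RingHomCompTriple.comp_apply, RingHom.id_apply, starRingEnd_self_apply,
      Finset.mul_sum]
    simp only [Finset.sum_mul]
    exact Finset.sum_congr rfl fun i _ => Finset.sum_congr rfl fun j _ => mul_comm _ _
  have step1 : ∑ i, ∑ j, (starRingEnd ℂ) (y i) * ((X.hadamard A) i j * x j) =
      ∑ k, (lam k : ℂ) *
        (inner ℂ (yk k) ((WithLp.equiv 2 (Fin n → ℂ)).symm (A *ᵥ (xk k))) : ℂ) := by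
    calc ∑ i, ∑ j, (starRingEnd ℂ) (y i) * ((X.hadamard A) i j * x j)
        = ∑ i, ∑ j, ∑ k, (lam k : ℂ) *
            ((U i k * (starRingEnd ℂ) (y i)) * (A i j * ((starRingEnd ℂ) (U j k) * x j))) := by
          refine Finset.sum_congr rfl fun i _ => Finset.sum_congr rfl fun j _ => ?_
          rw [Matrix.hadamard_apply, spectral_entry X hX i j]
          simp only [Finset.sum_mul, Finset.mul_sum]
          exact Finset.sum_congr rfl fun k _ => by ring
      _ = ∑ k, ∑ i, ∑ j, (lam k : ℂ) *
            ((U i k * (starRingEnd ℂ) (y i)) * (A i j * ((starRingEnd ℂ) (U j k) * x j))) :=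
          (Finset.sum_congr rfl fun i _ => Finset.sum_comm).trans Finset.sum_comm
      _ = ∑ k, (lam k : ℂ) *
          (inner ℂ (yk k) ((WithLp.equiv 2 (Fin n → ℂ)).symm (A *ᵥ (xk k))) : ℂ) := by
          refine Finset.sum_congr rfl fun k _ => ?_
          rw [hR k, Finset.mul_sum]
          exact Finset.sum_congr rfl fun i _ => (Finset.mul_sum _ _ _).symm
  -- Step 2: norms of the auxiliary vectors
  have hyknorm : ∀ k, ‖yk k‖^2 = ∑ i, ‖U i k‖^2 * ‖y i‖^2 := by
    intro k
    rw [EuclideanSpace.norm_eq, Real.sq_sqrt (Finset.sum_nonneg fun i _ => by positivity)]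
    refine Finset.sum_congr rfl fun i _ => ?_
    simp only [hyk, WithLp.equiv_symm_apply, PiLp.toLp_apply, norm_mul, RCLike.norm_conj]
    ring
  have hxknorm : ∀ k, ‖xk k‖^2 = ∑ j, ‖U j k‖^2 * ‖x j‖^2 := by
    intro k
    rw [EuclideanSpace.norm_eq, Real.sq_sqrt (Finset.sum_nonneg fun i _ => by positivity)]
    refine Finset.sum_congr rfl fun i _ => ?_
    simp only [hxk, WithLp.equiv_symm_apply, PiLp.toLp_apply, norm_mul, RCLike.norm_conj]
    ring
  -- Step 3: weighted sums are bounded by C * ‖·‖²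
  have hynorm2 : ‖y‖^2 = ∑ i, ‖y i‖^2 := by
    rw [EuclideanSpace.norm_eq, Real.sq_sqrt (Finset.sum_nonneg fun i _ => by positivity)]
  have hxnorm2 : ‖x‖^2 = ∑ i, ‖x i‖^2 := by
    rw [EuclideanSpace.norm_eq, Real.sq_sqrt (Finset.sum_nonneg fun i _ => by positivity)]
  have hsumy : ∑ k, |lam k| * ‖yk k‖^2 ≤ C * ‖y‖^2 := by
    calc ∑ k, |lam k| * ‖yk k‖^2
        = ∑ i, (∑ k, |lam k| * ‖U i k‖^2) * ‖y i‖^2 := by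
          simp only [hyknorm, Finset.mul_sum, Finset.sum_mul]
          exact (Finset.sum_congr rfl fun k _ => Finset.sum_congr rfl fun i _ => by
            ring).trans Finset.sum_comm
      _ ≤ ∑ i, C * ‖y i‖^2 := by
          refine Finset.sum_le_sum fun i _ => ?_
          have h1 : ∑ k, |lam k| * ‖U i k‖^2
              = ((Matrix.posSemidef_conjTranspose_mul_self X).sqrt i i).re :=
            (diag_re X hX i).symm
          have h2 : ((Matrix.posSemidef_conjTranspose_mul_self X).sqrt i i).re ≤ C :=
            le_ciSup (f := fun i : Fin n =>
              ((Matrix.posSemidef_conjTranspose_mul_self X).sqrt i i).re)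
              (Set.Finite.bddAbove (Set.finite_range _)) i
          exact mul_le_mul_of_nonneg_right (h1 ▸ h2) (by positivity)
      _ = C * ‖y‖^2 := by rw [hynorm2, Finset.mul_sum]
  have hsumx : ∑ k, |lam k| * ‖xk k‖^2 ≤ C * ‖x‖^2 := by
    calc ∑ k, |lam k| * ‖xk k‖^2
        = ∑ i, (∑ k, |lam k| * ‖U i k‖^2) * ‖x i‖^2 := by
          simp only [hxknorm, Finset.mul_sum, Finset.sum_mul]
          exact (Finset.sum_congr rfl fun k _ => Finset.sum_congr rfl fun i _ => by
            ring).trans Finset.sum_comm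
      _ ≤ ∑ i, C * ‖x i‖^2 := by
          refine Finset.sum_le_sum fun i _ => ?_
          have h1 : ∑ k, |lam k| * ‖U i k‖^2
              = ((Matrix.posSemidef_conjTranspose_mul_self X).sqrt i i).re :=
            (diag_re X hX i).symm
          have h2 : ((Matrix.posSemidef_conjTranspose_mul_self X).sqrt i i).re ≤ C :=
            le_ciSup (f := fun i : Fin n =>
              ((Matrix.posSemidef_conjTranspose_mul_self X).sqrt i i).re)
              (Set.Finite.bddAbove (Set.finite_range _)) i
          exact mul_le_mul_of_nonneg_right (h1 ▸ h2) (by positivity)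
      _ = C * ‖x‖^2 := by rw [hxnorm2, Finset.mul_sum]
  -- Step 4: put it all together
  rw [step1]
  calc ‖∑ k, (lam k : ℂ) *
        (inner ℂ (yk k) ((WithLp.equiv 2 (Fin n → ℂ)).symm (A *ᵥ (xk k))) : ℂ)‖
      ≤ ∑ k, ‖(lam k : ℂ) *
        (inner ℂ (yk k) ((WithLp.equiv 2 (Fin n → ℂ)).symm (A *ᵥ (xk k))) : ℂ)‖ :=
        norm_sum_le _ _
    _ ≤ ∑ k, |lam k| * (‖yk k‖ * (‖A‖ * ‖xk k‖)) := by
        refine Finset.sum_le_sum fun k _ => ?_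
        rw [norm_mul, Complex.norm_real, Real.norm_eq_abs]
        refine mul_le_mul_of_nonneg_left ?_ (abs_nonneg _)
        refine le_trans (norm_inner_le_norm _ _) ?_
        refine mul_le_mul_of_nonneg_left ?_ (norm_nonneg _)
        exact Matrix.l2_opNorm_mulVec A (xk k)
    _ = ∑ k, ‖A‖ * (Real.sqrt (|lam k| * ‖yk k‖^2) * Real.sqrt (|lam k| * ‖xk k‖^2)) := by
        refine Finset.sum_congr rfl fun k _ => ?_
        rw [Real.sqrt_mul (abs_nonneg _), Real.sqrt_mul (abs_nonneg _), Real.sqrt_sq (norm_nonneg _),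
          Real.sqrt_sq (norm_nonneg _)]
        conv_lhs => rw [← Real.mul_self_sqrt (abs_nonneg (lam k))]
        ring
    _ = ‖A‖ * ∑ k, Real.sqrt (|lam k| * ‖yk k‖^2) * Real.sqrt (|lam k| * ‖xk k‖^2) := by
        rw [Finset.mul_sum]
    _ ≤ ‖A‖ * (Real.sqrt (∑ k, |lam k| * ‖yk k‖^2) * Real.sqrt (∑ k, |lam k| * ‖xk k‖^2)) := by
        refine mul_le_mul_of_nonneg_left ?_ (norm_nonneg _)
        exact Real.sum_sqrt_mul_sqrt_le _ (fun k => by positivity) (fun k => by positivity)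
    _ ≤ ‖A‖ * (Real.sqrt (C * ‖y‖^2) * Real.sqrt (C * ‖x‖^2)) := by
        refine mul_le_mul_of_nonneg_left ?_ (norm_nonneg _)
        exact mul_le_mul (Real.sqrt_le_sqrt hsumy) (Real.sqrt_le_sqrt hsumx)
          (Real.sqrt_nonneg _) (Real.sqrt_nonneg _)
    _ = C * ‖A‖ * (‖y‖ * ‖x‖) := by
        rw [Real.sqrt_mul hC0, Real.sqrt_mul hC0, Real.sqrt_sq (norm_nonneg _),
          Real.sqrt_sq (norm_nonneg _)]
        conv_rhs => rw [← Real.mul_self_sqrt hC0]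
        ring

end DavisAux

open scoped Matrix.Norms.L2Operator in
/-- Davis' bound: for a Hermitian matrix `X`, the Schur multiplier norm of `X`
is bounded by the largest diagonal entry of `|X|`, the positive semidefinite
square root of `Xᴴ * X`. -/
theorem schur_multiplier_norm_le_sup_diag_abs
    (n : ℕ) (X : Matrix (Fin n) (Fin n) ℂ) (hX : X.IsHermitian)
    (A : Matrix (Fin n) (Fin n) ℂ) :
    opNorm (Matrix.hadamard X A) ≤
      (⨆ i : Fin n, ((Matrix.posSemidef_conjTranspose_mul_self X).sqrt i i).re) * opNorm A := by
  set C := ⨆ i : Fin n, ((Matrix.posSemidef_conjTranspose_mul_self X).sqrt i i).re with hC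
  have hC0 : 0 ≤ C := csup_nonneg X hX
  have hA : opNorm A = ‖A‖ := rfl
  rw [hA, opNorm]
  refine ContinuousLinearMap.opNorm_le_bound _ (by positivity) fun z => ?_
  set M := (Matrix.toEuclideanLin (X.hadamard A)).toContinuousLinearMap with hM
  have hMz : ∀ i, M z i = ∑ j, (X.hadamard A) i j * z j := fun i => rfl
  have hinner : (inner ℂ (M z) (M z) : ℂ) =
      ∑ i, ∑ j, (starRingEnd ℂ) (M z i) * ((X.hadamard A) i j * z j) := by
    simp only [PiLp.inner_apply, RCLike.inner_apply]
    refine Finset.sum_congr rfl fun i _ => ?_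
    rw [← Finset.mul_sum, ← hMz i, mul_comm]
  have h3 : ‖M z‖^2 ≤ C * ‖A‖ * (‖M z‖ * ‖z‖) := by
    calc ‖M z‖^2 = ‖(inner ℂ (M z) (M z) : ℂ)‖ := by
          rw [inner_self_eq_norm_sq_to_K]
          simp [norm_pow]
      _ = ‖∑ i, ∑ j, (starRingEnd ℂ) (M z i) * ((X.hadamard A) i j * z j)‖ := by
          rw [hinner]
      _ ≤ C * ‖A‖ * (‖M z‖ * ‖z‖) := key_bound X hX A (M z) z
  rcases eq_or_lt_of_le (norm_nonneg (M z)) with h | h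
  · rw [← h]
    positivity
  · nlinarith [h3, h]
end

section
/- Let X be an m×n complex matrix. Then for every m×n complex matrix A one has ‖X ∘ A‖_∞ ≤ (max_{1≤i≤m} ((XXᴴ)^{1/2})_{ii})^{1/2} · (max_{1≤j≤n} ((XᴴX)^{1/2})_{jj})^{1/2} · ‖A‖_∞ (Walter's upper bound for the Schur multiplier norm). -/
open Matrix BigOperators
open scoped ComplexOrder

/-- The positive semidefinite square root of a positive semidefinite matrix, as
`Matrix.PosSemidef.sqrt` was defined in Mathlib (Dec 2024). -/
noncomputable def posSemidefSqrt {k : Type*} [Fintype k] [DecidableEq k]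
    {M : Matrix k k ℂ} (hM : M.PosSemidef) : Matrix k k ℂ :=
  (hM.1.eigenvectorUnitary : Matrix k k ℂ) *
    diagonal (fun i => ((Real.sqrt (hM.1.eigenvalues i) : ℝ) : ℂ)) *
    (star hM.1.eigenvectorUnitary : Matrix k k ℂ)

namespace WalterAux

variable {m : ℕ} {P : Matrix (Fin m) (Fin m) ℂ}

noncomputable def D (hP : P.IsHermitian) (f : Fin m → ℝ) : Matrix (Fin m) (Fin m) ℂ :=
  (hP.eigenvectorUnitary : Matrix (Fin m) (Fin m) ℂ) * Matrix.diagonal (fun k => (f k : ℂ)) *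
    star (hP.eigenvectorUnitary : Matrix (Fin m) (Fin m) ℂ)

lemma D_mul (hP : P.IsHermitian) (f g : Fin m → ℝ) :
    D hP f * D hP g = D hP (fun k => f k * g k) := by
  have h1 : star (hP.eigenvectorUnitary : Matrix (Fin m) (Fin m) ℂ) *
      (hP.eigenvectorUnitary : Matrix (Fin m) (Fin m) ℂ) = 1 :=
    Matrix.mem_unitaryGroup_iff'.mp hP.eigenvectorUnitary.2
  simp only [D, Matrix.mul_assoc]
  rw [← Matrix.mul_assoc (star _) _ _, h1, Matrix.one_mul,
    ← Matrix.mul_assoc (Matrix.diagonal _) _ _, Matrix.diagonal_mul_diagonal]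
  simp [← Complex.ofReal_mul]

lemma D_add (hP : P.IsHermitian) (f g : Fin m → ℝ) :
    D hP f + D hP g = D hP (fun k => f k + g k) := by
  have hd : (Matrix.diagonal (fun k => (f k : ℂ)) + Matrix.diagonal (fun k => (g k : ℂ)))
      = Matrix.diagonal (fun k => ((f k + g k : ℝ) : ℂ)) := by
    rw [Matrix.diagonal_add]
    congr 1
    funext k
    push_cast
    ring
  simp only [D, ← Matrix.add_mul, ← Matrix.mul_add, hd]

lemma D_one (hP : P.IsHermitian) : D hP (fun _ => 1) = 1 := by
  have h2 : (hP.eigenvectorUnitary : Matrix (Fin m) (Fin m) ℂ) *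
      star (hP.eigenvectorUnitary : Matrix (Fin m) (Fin m) ℂ) = 1 :=
    Matrix.mem_unitaryGroup_iff.mp hP.eigenvectorUnitary.2
  simp [D, h2]

lemma D_zero (hP : P.IsHermitian) : D hP (fun _ => 0) = 0 := by
  simp [D]

lemma D_posSemidef (hP : P.IsHermitian) {f : Fin m → ℝ} (hf : ∀ k, 0 ≤ f k) :
    (D hP f).PosSemidef := by
  have : (Matrix.diagonal (fun k => (f k : ℂ))).PosSemidef := by
    rw [Matrix.posSemidef_diagonal_iff]
    intro k
    exact_mod_cast hf k
  simpa [Matrix.star_eq_conjTranspose, D] using this.mul_mul_conjTranspose_same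
    (hP.eigenvectorUnitary : Matrix (Fin m) (Fin m) ℂ)

open scoped MatrixOrder in
lemma posSemidefSqrt_eq_cfc {k : Type*} [Fintype k] [DecidableEq k] {M : Matrix k k ℂ}
    (hM : M.PosSemidef) : posSemidefSqrt hM = CFC.sqrt M := by
  rw [CFC.sqrt_eq_cfc, cfc_nnreal_eq_real _ M hM.nonneg, hM.1.cfc_eq]
  simp [IsHermitian.cfc, posSemidefSqrt, Function.comp_def, max_eq_left (hM.eigenvalues_nonneg _)]

open scoped MatrixOrder in
lemma eq_sqrt_aux {k : Type*} [Fintype k] [DecidableEq k] {A M : Matrix k k ℂ}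
    (hA : A.PosSemidef) (hM : M.PosSemidef) (h : A ^ 2 = M) : A = posSemidefSqrt hM := by
  rw [posSemidefSqrt_eq_cfc, ← h, CFC.sqrt_sq A hA.nonneg]

lemma D_eigenvalues (hP : P.IsHermitian) : D hP hP.eigenvalues = P := by
  simpa [D, Function.comp_def] using hP.spectral_theorem.symm

section factor

variable {n : ℕ} (X : Matrix (Fin m) (Fin n) ℂ)

noncomputable def hP (X : Matrix (Fin m) (Fin n) ℂ) : (X * Xᴴ).PosSemidef :=
  Matrix.posSemidef_self_mul_conjTranspose X

noncomputable def lam : Fin m → ℝ := (hP X).1.eigenvalues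

lemma D_lam : D (hP X).1 (lam X) = X * Xᴴ := D_eigenvalues (hP X).1

noncomputable def Bm : Matrix (Fin m) (Fin m) ℂ :=
  D (hP X).1 (fun k => Real.sqrt (Real.sqrt (lam X k)))

noncomputable def Sm : Matrix (Fin m) (Fin m) ℂ :=
  D (hP X).1 (fun k => if 0 < lam X k then (Real.sqrt (Real.sqrt (lam X k)))⁻¹ else 0)

noncomputable def Cm : Matrix (Fin m) (Fin n) ℂ := Sm X * X

noncomputable def ind : Fin m → ℝ := fun k => if 0 < lam X k then 1 else 0

lemma lam_nonneg (k : Fin m) : 0 ≤ lam X k := (hP X).eigenvalues_nonneg k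

lemma ind_mul_X : D (hP X).1 (ind X) * X = X := by
  set F := D (hP X).1 (fun k => 1 - ind X k) with hF
  have hFpsd : F.PosSemidef := D_posSemidef _ (fun k => by
    unfold ind; split <;> norm_num)
  have hFPF : F * (X * Xᴴ) * F = 0 := by
    rw [← D_lam X, hF, D_mul, D_mul]
    have : (fun k => (1 - ind X k) * lam X k * (1 - ind X k)) = fun _ => (0:ℝ) := by
      funext k
      unfold ind
      rcases lt_or_eq_of_le (lam_nonneg X k) with h | h
      · simp [h]
      · rw [← h]; ring
    rw [this, D_zero]
  have hFX : F * X = 0 := by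
    have h0 : (F * X) * (F * X)ᴴ = 0 := by
      rw [Matrix.conjTranspose_mul, hFpsd.1.eq]
      calc F * X * (Xᴴ * F) = F * (X * Xᴴ) * F := by simp only [Matrix.mul_assoc]
      _ = 0 := hFPF
    exact Matrix.self_mul_conjTranspose_eq_zero.mp h0
  have hsum : D (hP X).1 (ind X) + F = 1 := by
    rw [hF, D_add]
    have : (fun k => ind X k + (1 - ind X k)) = fun _ => (1:ℝ) := by funext k; ring
    rw [this, D_one]
  have := congrArg (· * X) hsum
  simpa [Matrix.add_mul, hFX] using this

lemma B_mul_C : Bm X * Cm X = X := by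
  rw [Cm, ← Matrix.mul_assoc, Bm, Sm, D_mul]
  have : (fun k => Real.sqrt (Real.sqrt (lam X k)) *
      (if 0 < lam X k then (Real.sqrt (Real.sqrt (lam X k)))⁻¹ else 0)) = ind X := by
    funext k
    unfold ind
    split
    · next h =>
      rw [mul_inv_cancel₀]
      positivity
    · rw [mul_zero]
  rw [this, ind_mul_X]

lemma B_posSemidef : (Bm X).PosSemidef :=
  D_posSemidef _ (fun k => Real.sqrt_nonneg _)

lemma B_mul_Bh : Bm X * (Bm X)ᴴ = posSemidefSqrt (hP X) := by
  rw [(B_posSemidef X).1.eq, Bm, D_mul]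
  have h1 : (fun k => Real.sqrt (Real.sqrt (lam X k)) * Real.sqrt (Real.sqrt (lam X k)))
      = fun k => Real.sqrt (lam X k) := by
    funext k; exact Real.mul_self_sqrt (Real.sqrt_nonneg _)
  rw [h1]
  refine (eq_sqrt_aux (D_posSemidef _ (fun k => Real.sqrt_nonneg _)) (hP X) ?_)
  rw [pow_two, D_mul]
  have h2 : (fun k => Real.sqrt (lam X k) * Real.sqrt (lam X k)) = lam X := by
    funext k; exact Real.mul_self_sqrt (lam_nonneg X k)
  rw [h2, D_lam]

noncomputable def hQ (X : Matrix (Fin m) (Fin n) ℂ) : (Xᴴ * X).PosSemidef :=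
  Matrix.posSemidef_conjTranspose_mul_self X

lemma Ch_mul_C : (Cm X)ᴴ * Cm X = posSemidefSqrt (hQ X) := by
  have hSpsd : (Sm X).PosSemidef := D_posSemidef _ (fun k => by split <;> positivity)
  have hD2 : Sm X * Sm X = D (hP X).1
      (fun k => (if 0 < lam X k then (Real.sqrt (Real.sqrt (lam X k)))⁻¹ else 0) *
        (if 0 < lam X k then (Real.sqrt (Real.sqrt (lam X k)))⁻¹ else 0)) := by
    rw [Sm, D_mul]
  set s2 : Fin m → ℝ := fun k =>
    (if 0 < lam X k then (Real.sqrt (Real.sqrt (lam X k)))⁻¹ else 0) *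
      (if 0 < lam X k then (Real.sqrt (Real.sqrt (lam X k)))⁻¹ else 0) with hs2
  have hs2nn : ∀ k, 0 ≤ s2 k := fun k => by rw [hs2]; dsimp; split <;> positivity
  have hform : (Cm X)ᴴ * Cm X = Xᴴ * D (hP X).1 s2 * X := by
    rw [Cm, Matrix.conjTranspose_mul, hSpsd.1.eq]
    rw [show Xᴴ * Sm X * (Sm X * X) = Xᴴ * (Sm X * Sm X) * X by simp only [Matrix.mul_assoc],
      hD2]
  rw [hform]
  have hkey : D (hP X).1 s2 * (X * Xᴴ) * D (hP X).1 s2 = D (hP X).1 (ind X) := by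
    have hkey0 : D (hP X).1 s2 * D (hP X).1 (lam X) * D (hP X).1 s2 = D (hP X).1 (ind X) := by
      rw [D_mul, D_mul]
      refine congrArg _ (funext fun k => ?_)
      simp only [hs2, ind]
      rcases lt_or_eq_of_le (lam_nonneg X k) with h | h
      · have h4 : Real.sqrt (Real.sqrt (lam X k)) * Real.sqrt (Real.sqrt (lam X k))
            = Real.sqrt (lam X k) := Real.mul_self_sqrt (Real.sqrt_nonneg _)
        have h5 : Real.sqrt (lam X k) * Real.sqrt (lam X k) = lam X k :=
          Real.mul_self_sqrt (le_of_lt h)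
        have hne : Real.sqrt (Real.sqrt (lam X k)) ≠ 0 := by positivity
        have hl : lam X k = Real.sqrt (Real.sqrt (lam X k)) * Real.sqrt (Real.sqrt (lam X k)) *
            (Real.sqrt (Real.sqrt (lam X k)) * Real.sqrt (Real.sqrt (lam X k))) := by
          rw [h4, h5]
        rw [if_pos h, if_pos h]
        field_simp
        linear_combination hl
      · rw [← h]
        norm_num
    rwa [D_lam X] at hkey0
  refine eq_sqrt_aux ((D_posSemidef _ hs2nn).conjTranspose_mul_mul_same X) (hQ X) ?_
  rw [pow_two]
  calc Xᴴ * D (hP X).1 s2 * X * (Xᴴ * D (hP X).1 s2 * X)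
      = Xᴴ * (D (hP X).1 s2 * (X * Xᴴ) * D (hP X).1 s2) * X := by
        simp only [Matrix.mul_assoc]
    _ = Xᴴ * (D (hP X).1 (ind X) * X) := by rw [hkey, Matrix.mul_assoc]
    _ = Xᴴ * X := by rw [ind_mul_X]



lemma diag_P (i : Fin m) : (posSemidefSqrt (hP X) i i).re = ∑ k, ‖Bm X i k‖^2 := by
  rw [← B_mul_Bh X, Matrix.mul_apply]
  simp [Matrix.conjTranspose_apply, Complex.mul_conj, Complex.re_sum,
    Complex.sq_norm]

lemma diag_Q (j : Fin n) : (posSemidefSqrt (hQ X) j j).re = ∑ k, ‖Cm X k j‖^2 := by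
  rw [← Ch_mul_C X, Matrix.mul_apply]
  simp [Matrix.conjTranspose_apply, Complex.re_sum, Complex.sq_norm,
    mul_comm, Complex.mul_conj]

end factor
set_option maxHeartbeats 2000000

lemma core {m n : ℕ} (B : Matrix (Fin m) (Fin m) ℂ) (C A : Matrix (Fin m) (Fin n) ℂ) :
    opNorm (Matrix.hadamard (B * C) A) ≤
      Real.sqrt (⨆ i : Fin m, ∑ k, ‖B i k‖^2) *
        Real.sqrt (⨆ j : Fin n, ∑ k, ‖C k j‖^2) * opNorm A := by
  classical
  set α := Real.sqrt (⨆ i : Fin m, ∑ k, ‖B i k‖^2) with hα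
  set β := Real.sqrt (⨆ j : Fin n, ∑ k, ‖C k j‖^2) with hβ
  have hα0 : 0 ≤ α := Real.sqrt_nonneg _
  have hβ0 : 0 ≤ β := Real.sqrt_nonneg _
  set T := (Matrix.toEuclideanLin (Matrix.hadamard (B * C) A)).toContinuousLinearMap with hT
  set TA := (Matrix.toEuclideanLin A).toContinuousLinearMap with hTA
  have hA0 : 0 ≤ opNorm A := norm_nonneg _
  -- the key inner-product bound
  have key : ∀ (x : EuclideanSpace ℂ (Fin m)) (y : EuclideanSpace ℂ (Fin n)),
      ‖(inner ℂ x (T y) : ℂ)‖ ≤ opNorm A * ((α * ‖x‖) * (β * ‖y‖)) := by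
    intro x y
    set u : Fin m → EuclideanSpace ℂ (Fin m) := fun k =>
      (WithLp.equiv 2 (Fin m → ℂ)).symm (fun i => x i * star (B i k)) with hu
    set v : Fin m → EuclideanSpace ℂ (Fin n) := fun k =>
      (WithLp.equiv 2 (Fin n → ℂ)).symm (fun j => C k j * y j) with hv
    have expand : (inner ℂ x (T y) : ℂ) = ∑ k, (inner ℂ (u k) (TA (v k)) : ℂ) := by
      simp only [hT, hTA, hu, hv, LinearMap.coe_toContinuousLinearMap',
        Matrix.toEuclideanLin_apply, PiLp.inner_apply, RCLike.inner_apply,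
        WithLp.equiv_symm_apply, PiLp.toLp_apply, Matrix.mulVec, dotProduct,
        Matrix.hadamard_apply, Matrix.mul_apply, _root_.map_mul, star_star, RCLike.star_def, starRingEnd_self_apply]
      simp only [Finset.mul_sum, Finset.sum_mul]
      have h1 : ∀ (f : Fin m → Fin n → Fin m → ℂ),
          ∑ i, ∑ j, ∑ k, f i j k = ∑ k, ∑ i, ∑ j, f i j k := by
        intro f
        calc ∑ i, ∑ j, ∑ k, f i j k = ∑ i, ∑ k, ∑ j, f i j k :=
              Finset.sum_congr rfl fun i _ => Finset.sum_comm
          _ = ∑ k, ∑ i, ∑ j, f i j k := Finset.sum_comm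
      rw [h1 (fun i j k => B i k * C k j * A i j * y j * (starRingEnd ℂ) (x i))]
      refine Finset.sum_congr rfl fun k _ => Finset.sum_congr rfl fun i _ =>
        Finset.sum_congr rfl fun j _ => by ring
    have hTAnorm : opNorm A = ‖TA‖ := rfl
    have hunorm : ∀ k, ‖u k‖^2 = ∑ i, ‖x i‖^2 * ‖B i k‖^2 := by
      intro k
      rw [hu, EuclideanSpace.norm_eq, Real.sq_sqrt (by positivity)]
      refine Finset.sum_congr rfl fun i _ => ?_
      simp [WithLp.equiv_symm_apply, mul_pow]
    have hvnorm : ∀ k, ‖v k‖^2 = ∑ j, ‖C k j‖^2 * ‖y j‖^2 := by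
      intro k
      rw [hv, EuclideanSpace.norm_eq, Real.sq_sqrt (by positivity)]
      refine Finset.sum_congr rfl fun j _ => ?_
      simp [WithLp.equiv_symm_apply, mul_pow]
    have hsupB0 : 0 ≤ ⨆ i : Fin m, ∑ k, ‖B i k‖^2 :=
      Real.iSup_nonneg fun i => by positivity
    have hsupC0 : 0 ≤ ⨆ j : Fin n, ∑ k, ‖C k j‖^2 :=
      Real.iSup_nonneg fun j => by positivity
    have hsumu : Real.sqrt (∑ k, ‖u k‖^2) ≤ α * ‖x‖ := by
      have hb : ∑ k : Fin m, ‖u k‖^2 ≤ (⨆ i : Fin m, ∑ k, ‖B i k‖^2) * ‖x‖^2 := by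
        calc ∑ k : Fin m, ‖u k‖^2 = ∑ i, ‖x i‖^2 * (∑ k, ‖B i k‖^2) := by
              simp_rw [hunorm, Finset.mul_sum]
              exact Finset.sum_comm
          _ ≤ ∑ i, ‖x i‖^2 * (⨆ i : Fin m, ∑ k, ‖B i k‖^2) :=
              Finset.sum_le_sum fun i _ => mul_le_mul_of_nonneg_left
                (le_ciSup (f := fun i : Fin m => ∑ k : Fin m, ‖B i k‖^2)
                  (Set.Finite.bddAbove (Set.finite_range _)) i) (by positivity)
          _ = (⨆ i : Fin m, ∑ k, ‖B i k‖^2) * ‖x‖^2 := by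
              rw [← Finset.sum_mul, EuclideanSpace.norm_eq, Real.sq_sqrt (by positivity)]
              ring
      calc Real.sqrt (∑ k, ‖u k‖^2) ≤
            Real.sqrt ((⨆ i : Fin m, ∑ k, ‖B i k‖^2) * ‖x‖^2) := Real.sqrt_le_sqrt hb
        _ = α * ‖x‖ := by
            rw [hα, Real.sqrt_mul hsupB0, Real.sqrt_sq (norm_nonneg x)]
    have hsumv : Real.sqrt (∑ k, ‖v k‖^2) ≤ β * ‖y‖ := by
      have hb : ∑ k : Fin m, ‖v k‖^2 ≤ (⨆ j : Fin n, ∑ k, ‖C k j‖^2) * ‖y‖^2 := by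
        calc ∑ k : Fin m, ‖v k‖^2 = ∑ j, ‖y j‖^2 * (∑ k, ‖C k j‖^2) := by
              simp_rw [hvnorm]
              rw [Finset.sum_comm]
              refine Finset.sum_congr rfl fun j _ => ?_
              rw [Finset.mul_sum]
              exact Finset.sum_congr rfl fun k _ => by ring
          _ ≤ ∑ j, ‖y j‖^2 * (⨆ j : Fin n, ∑ k, ‖C k j‖^2) :=
              Finset.sum_le_sum fun j _ => mul_le_mul_of_nonneg_left
                (le_ciSup (f := fun j : Fin n => ∑ k : Fin m, ‖C k j‖^2)
                  (Set.Finite.bddAbove (Set.finite_range _)) j) (by positivity)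
          _ = (⨆ j : Fin n, ∑ k, ‖C k j‖^2) * ‖y‖^2 := by
              rw [← Finset.sum_mul, EuclideanSpace.norm_eq, Real.sq_sqrt (by positivity)]
              ring
      calc Real.sqrt (∑ k, ‖v k‖^2) ≤
            Real.sqrt ((⨆ j : Fin n, ∑ k, ‖C k j‖^2) * ‖y‖^2) := Real.sqrt_le_sqrt hb
        _ = β * ‖y‖ := by
            rw [hβ, Real.sqrt_mul hsupC0, Real.sqrt_sq (norm_nonneg y)]
    calc ‖(inner ℂ x (T y) : ℂ)‖ = ‖∑ k, (inner ℂ (u k) (TA (v k)) : ℂ)‖ := by rw [expand]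
      _ ≤ ∑ k, ‖(inner ℂ (u k) (TA (v k)) : ℂ)‖ := norm_sum_le _ _
      _ ≤ ∑ k, opNorm A * (‖u k‖ * ‖v k‖) := by
          refine Finset.sum_le_sum fun k _ => ?_
          calc ‖(inner ℂ (u k) (TA (v k)) : ℂ)‖ ≤ ‖u k‖ * ‖TA (v k)‖ :=
                norm_inner_le_norm _ _
            _ ≤ ‖u k‖ * (‖TA‖ * ‖v k‖) :=
                mul_le_mul_of_nonneg_left (TA.le_opNorm (v k)) (norm_nonneg _)
            _ = opNorm A * (‖u k‖ * ‖v k‖) := by rw [hTAnorm]; ring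
      _ = opNorm A * ∑ k, ‖u k‖ * ‖v k‖ := by rw [Finset.mul_sum]
      _ ≤ opNorm A * (Real.sqrt (∑ k, ‖u k‖^2) * Real.sqrt (∑ k, ‖v k‖^2)) := by
          refine mul_le_mul_of_nonneg_left ?_ hA0
          exact Real.sum_mul_le_sqrt_mul_sqrt _ _ _
      _ ≤ opNorm A * ((α * ‖x‖) * (β * ‖y‖)) := by
          refine mul_le_mul_of_nonneg_left ?_ hA0
          exact mul_le_mul hsumu hsumv (Real.sqrt_nonneg _) (by positivity)
  refine ContinuousLinearMap.opNorm_le_bound T (by positivity) fun y => ?_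
  rcases eq_or_lt_of_le (norm_nonneg (T y)) with h | h
  · exact le_trans (le_of_eq h.symm) (by positivity)
  · have hk := key (T y) y
    rw [inner_self_eq_norm_sq_to_K] at hk
    have hk2 : ‖T y‖^2 ≤ opNorm A * ((α * ‖T y‖) * (β * ‖y‖)) := by
      simpa [norm_pow, Complex.norm_real, abs_norm] using hk
    nlinarith [hk2, h]


end WalterAux

/-- Walter's bound: the Schur multiplier norm of `X` is bounded by
`‖(XXᴴ)^{1/2}‖_c^{1/2} * ‖(XᴴX)^{1/2}‖_c^{1/2}` expressed via diagonal entries of the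
positive semidefinite square roots. -/
theorem schur_multiplier_norm_le_walter
    (m n : ℕ) (X : Matrix (Fin m) (Fin n) ℂ) (A : Matrix (Fin m) (Fin n) ℂ) :
    opNorm (Matrix.hadamard X A) ≤
      Real.sqrt (⨆ i : Fin m, (posSemidefSqrt (Matrix.posSemidef_self_mul_conjTranspose X) i i).re) *
        Real.sqrt (⨆ j : Fin n, (posSemidefSqrt (Matrix.posSemidef_conjTranspose_mul_self X) j j).re) *
        opNorm A := by
  have h := WalterAux.core (WalterAux.Bm X) (WalterAux.Cm X) A
  rw [WalterAux.B_mul_C X] at h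
  have h1 : (⨆ i : Fin m, (posSemidefSqrt (Matrix.posSemidef_self_mul_conjTranspose X) i i).re)
      = ⨆ i : Fin m, ∑ k, ‖WalterAux.Bm X i k‖^2 :=
    iSup_congr fun i => WalterAux.diag_P X i
  have h2 : (⨆ j : Fin n, (posSemidefSqrt (Matrix.posSemidef_conjTranspose_mul_self X) j j).re)
      = ⨆ j : Fin n, ∑ k, ‖WalterAux.Cm X k j‖^2 :=
    iSup_congr fun j => WalterAux.diag_Q X j
  rw [h1, h2]
  exact h
end

section
/- Let γ ∈ ℂᵐ, let L be an l×m complex matrix and R an l×n complex matrix, and set X = Δ_m(γ) Lᴴ R. Then for all a ∈ ℂᵐ with max_i |a_i| ≤ 1 and all m×n complex matrices B with ‖B‖_∞ ≤ 1, the vector T_X(a,B) ∈ ℂⁿ with entries T_X(a,B)_j = ∑_i a_i X_{ij} B_{ij} satisfies ‖T_X(a,B)‖₂ ≤ ‖γ‖₂ · ‖L‖_c · ‖R‖_c. -/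
open Matrix BigOperators

/-- The Euclidean norm of a complex vector. -/
noncomputable def eNorm {n : ℕ} (ξ : Fin n → ℂ) : ℝ :=
  Real.sqrt (∑ j, ‖ξ j‖ ^ 2)

lemma col_le_colNorm {l m : ℕ} (L : Matrix (Fin l) (Fin m) ℂ) (j : Fin m) :
    (∑ i, ‖L i j‖ ^ 2) ≤ colNorm L ^ 2 := by
  have h : Real.sqrt (∑ i, ‖L i j‖ ^ 2) ≤ colNorm L := by
    rw [colNorm]
    exact le_ciSup (f := fun j => Real.sqrt (∑ i, ‖L i j‖ ^ 2))
      (Set.Finite.bddAbove (Set.finite_range _)) j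
  calc (∑ i, ‖L i j‖ ^ 2) = Real.sqrt (∑ i, ‖L i j‖ ^ 2) ^ 2 := by
        rw [Real.sq_sqrt (by positivity)]
    _ ≤ colNorm L ^ 2 := by
        apply pow_le_pow_left₀ (Real.sqrt_nonneg _) h

lemma scalarCS {m : ℕ} (u v : Fin m → ℂ) :
    ‖∑ i, u i * v i‖ ≤ Real.sqrt (∑ i, ‖u i‖ ^ 2) * Real.sqrt (∑ i, ‖v i‖ ^ 2) := by
  calc ‖∑ i, u i * v i‖ ≤ ∑ i, ‖u i * v i‖ := norm_sum_le _ _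
    _ = ∑ i, ‖u i‖ * ‖v i‖ := by simp [norm_mul]
    _ ≤ _ := Real.sum_mul_le_sqrt_mul_sqrt _ _ _

lemma mulVecNorm {m n : ℕ} (B : Matrix (Fin m) (Fin n) ℂ) (w : Fin n → ℂ) :
    Real.sqrt (∑ i, ‖B.mulVec w i‖ ^ 2) ≤ opNorm B * Real.sqrt (∑ j, ‖w j‖ ^ 2) := by
  have h := (Matrix.toEuclideanLin B).toContinuousLinearMap.le_opNorm
      ((WithLp.equiv 2 (Fin n → ℂ)).symm w)
  simpa [opNorm, EuclideanSpace.norm_eq, Matrix.toEuclideanLin_apply_piLp_toLp] using h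

/-- If `X = Δ_m(γ) Lᴴ R`, then for every `a` with `max_i |a_i| ≤ 1` and `B` with
`‖B‖_∞ ≤ 1`, the vector `T_X(a,B)` has Euclidean norm at most `‖γ‖₂ ‖L‖_c ‖R‖_c`. -/
theorem Tx_le_of_factorization
    (l m n : ℕ) (γ : Fin m → ℂ)
    (L : Matrix (Fin l) (Fin m) ℂ) (R : Matrix (Fin l) (Fin n) ℂ)
    (X : Matrix (Fin m) (Fin n) ℂ) (hX : X = Matrix.diagonal γ * (Lᴴ * R))
    (a : Fin m → ℂ) (B : Matrix (Fin m) (Fin n) ℂ)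
    (ha : ∀ i, ‖a i‖ ≤ 1) (hB : opNorm B ≤ 1) :
    eNorm (fun j => ∑ i, a i * X i j * B i j) ≤ eNorm γ * colNorm L * colNorm R := by
  set C := eNorm γ * colNorm L * colNorm R with hC
  have hCnn : 0 ≤ C := by
    have h1 : 0 ≤ eNorm γ := Real.sqrt_nonneg _
    have h2 := colNorm_nonneg L
    have h3 := colNorm_nonneg R
    positivity
  set T : Fin n → ℂ := fun j => ∑ i, a i * X i j * B i j with hT
  have hXe : ∀ i j, X i j = γ i * ∑ k, star (L k i) * R k j := by
    intro i j
    simp [hX, Matrix.mul_apply, Matrix.diagonal_apply, Matrix.conjTranspose_apply,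
      Finset.mul_sum, ite_mul, Finset.sum_ite_eq, Finset.mem_univ]
  have key : ∀ ξ : Fin n → ℂ, ‖∑ j, ξ j * T j‖ ≤ C * eNorm ξ := by
    intro ξ
    set u : Fin l → Fin m → ℂ := fun k i => a i * γ i * star (L k i) with hu
    set w : Fin l → Fin n → ℂ := fun k j => R k j * ξ j with hw
    have halg : ∑ j, ξ j * T j = ∑ k, ∑ i, u k i * B.mulVec (w k) i := by
      have lhs : ∑ j, ξ j * T j
          = ∑ j, ∑ i, ∑ k, (a i * γ i * star (L k i)) * (B i j * (R k j * ξ j)) := by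
        refine Finset.sum_congr rfl fun j _ => ?_
        rw [hT, Finset.mul_sum]
        refine Finset.sum_congr rfl fun i _ => ?_
        rw [hXe i j, show ξ j * (a i * (γ i * ∑ k, star (L k i) * R k j) * B i j)
            = (ξ j * a i * γ i * B i j) * ∑ k, star (L k i) * R k j by ring, Finset.mul_sum]
        exact Finset.sum_congr rfl fun k _ => by ring
      have rhs : ∑ k, ∑ i, u k i * B.mulVec (w k) i
          = ∑ k, ∑ i, ∑ j, (a i * γ i * star (L k i)) * (B i j * (R k j * ξ j)) := by
        refine Finset.sum_congr rfl fun k _ => Finset.sum_congr rfl fun i _ => ?_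
        rw [Matrix.mulVec, dotProduct, Finset.mul_sum]
      rw [lhs, rhs]
      calc ∑ j, ∑ i, ∑ k, (a i * γ i * star (L k i)) * (B i j * (R k j * ξ j))
          = ∑ j, ∑ k, ∑ i, (a i * γ i * star (L k i)) * (B i j * (R k j * ξ j)) :=
            Finset.sum_congr rfl fun j _ => Finset.sum_comm
        _ = ∑ k, ∑ j, ∑ i, (a i * γ i * star (L k i)) * (B i j * (R k j * ξ j)) :=
            Finset.sum_comm
        _ = ∑ k, ∑ i, ∑ j, (a i * γ i * star (L k i)) * (B i j * (R k j * ξ j)) :=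
            Finset.sum_congr rfl fun k _ => Finset.sum_comm
    have h1 : Real.sqrt (∑ k, ∑ i, ‖u k i‖ ^ 2) ≤ eNorm γ * colNorm L := by
      have hb : (∑ k, ∑ i, ‖u k i‖ ^ 2) ≤ (∑ i, ‖γ i‖ ^ 2) * colNorm L ^ 2 := by
        rw [Finset.sum_comm, Finset.sum_mul]
        refine Finset.sum_le_sum fun i _ => ?_
        have : ∑ k, ‖u k i‖ ^ 2 = (‖a i‖ ^ 2 * ‖γ i‖ ^ 2) * ∑ k, ‖L k i‖ ^ 2 := by
          rw [Finset.mul_sum]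
          refine Finset.sum_congr rfl fun k _ => ?_
          simp [hu, norm_mul, mul_pow]
        rw [this]
        have h2 := col_le_colNorm L i
        have h3 : ‖a i‖ ^ 2 ≤ 1 := by
          have := ha i
          nlinarith [norm_nonneg (a i)]
        have hS : (0:ℝ) ≤ ∑ k, ‖L k i‖ ^ 2 :=
          Finset.sum_nonneg fun k _ => sq_nonneg _
        have hfst : ‖a i‖ ^ 2 * ‖γ i‖ ^ 2 ≤ 1 * ‖γ i‖ ^ 2 :=
          mul_le_mul_of_nonneg_right h3 (sq_nonneg _)
        have := mul_le_mul hfst h2 hS (by positivity)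
        simpa using this
      calc Real.sqrt (∑ k, ∑ i, ‖u k i‖ ^ 2) ≤ Real.sqrt ((∑ i, ‖γ i‖ ^ 2) * colNorm L ^ 2) :=
            Real.sqrt_le_sqrt hb
        _ = eNorm γ * colNorm L := by
            rw [Real.sqrt_mul (by positivity), Real.sqrt_sq (colNorm_nonneg L), eNorm]
    have h2 : Real.sqrt (∑ k, ∑ j, ‖w k j‖ ^ 2) ≤ colNorm R * eNorm ξ := by
      have hb : (∑ k, ∑ j, ‖w k j‖ ^ 2) ≤ colNorm R ^ 2 * (∑ j, ‖ξ j‖ ^ 2) := by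
        rw [Finset.sum_comm, Finset.mul_sum]
        refine Finset.sum_le_sum fun j _ => ?_
        have : ∑ k, ‖w k j‖ ^ 2 = (∑ k, ‖R k j‖ ^ 2) * ‖ξ j‖ ^ 2 := by
          rw [Finset.sum_mul]
          refine Finset.sum_congr rfl fun k _ => ?_
          simp [hw, norm_mul, mul_pow]
        rw [this]
        have h3 := col_le_colNorm R j
        nlinarith [sq_nonneg ‖ξ j‖]
      calc Real.sqrt (∑ k, ∑ j, ‖w k j‖ ^ 2) ≤ Real.sqrt (colNorm R ^ 2 * ∑ j, ‖ξ j‖ ^ 2) :=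
            Real.sqrt_le_sqrt hb
        _ = colNorm R * eNorm ξ := by
            rw [Real.sqrt_mul (by positivity), Real.sqrt_sq (colNorm_nonneg R), eNorm]
    calc ‖∑ j, ξ j * T j‖ = ‖∑ k, ∑ i, u k i * B.mulVec (w k) i‖ := by rw [halg]
      _ ≤ ∑ k, ‖∑ i, u k i * B.mulVec (w k) i‖ := norm_sum_le _ _
      _ ≤ ∑ k, Real.sqrt (∑ i, ‖u k i‖ ^ 2) * Real.sqrt (∑ i, ‖B.mulVec (w k) i‖ ^ 2) :=
          Finset.sum_le_sum fun k _ => scalarCS _ _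
      _ ≤ ∑ k, Real.sqrt (∑ i, ‖u k i‖ ^ 2) * Real.sqrt (∑ j, ‖w k j‖ ^ 2) := by
          refine Finset.sum_le_sum fun k _ => mul_le_mul_of_nonneg_left ?_ (Real.sqrt_nonneg _)
          calc Real.sqrt (∑ i, ‖B.mulVec (w k) i‖ ^ 2)
              ≤ opNorm B * Real.sqrt (∑ j, ‖w k j‖ ^ 2) := mulVecNorm B (w k)
            _ ≤ 1 * Real.sqrt (∑ j, ‖w k j‖ ^ 2) :=
                mul_le_mul_of_nonneg_right hB (Real.sqrt_nonneg _)
            _ = Real.sqrt (∑ j, ‖w k j‖ ^ 2) := one_mul _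
      _ ≤ Real.sqrt (∑ k, ∑ i, ‖u k i‖ ^ 2) * Real.sqrt (∑ k, ∑ j, ‖w k j‖ ^ 2) :=
          Real.sum_sqrt_mul_sqrt_le _ (fun k => by positivity) (fun k => by positivity)
      _ ≤ (eNorm γ * colNorm L) * (colNorm R * eNorm ξ) := by
          apply mul_le_mul h1 h2 (Real.sqrt_nonneg _)
          have := colNorm_nonneg L
          have : 0 ≤ eNorm γ := Real.sqrt_nonneg _
          positivity
      _ = C * eNorm ξ := by rw [hC]; ring
  -- finish
  have hfin := key (fun j => star (T j))
  have heq : ∑ j, star (T j) * T j = ((∑ j, ‖T j‖ ^ 2 : ℝ) : ℂ) := by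
    push_cast
    refine Finset.sum_congr rfl fun j _ => ?_
    rw [Complex.star_def, mul_comm, Complex.mul_conj']
  rw [heq] at hfin
  have hnorm : ‖((∑ j, ‖T j‖ ^ 2 : ℝ) : ℂ)‖ = ∑ j, ‖T j‖ ^ 2 := by
    rw [Complex.norm_real, Real.norm_of_nonneg (Finset.sum_nonneg fun j _ => sq_nonneg _)]
  have hen : eNorm (fun j => star (T j)) = eNorm T := by
    simp [eNorm]
  rw [hnorm, hen] at hfin
  have hTsq : eNorm T * eNorm T = ∑ j, ‖T j‖ ^ 2 := by
    rw [eNorm, Real.mul_self_sqrt (Finset.sum_nonneg fun j _ => sq_nonneg _)]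
  rcases eq_or_lt_of_le (Real.sqrt_nonneg (∑ j, ‖T j‖ ^ 2)) with h0 | h0
  · show eNorm T ≤ C
    rw [eNorm, ← h0]
    exact hCnn
  · have h0' : 0 < eNorm T := by rw [eNorm]; exact h0
    have : eNorm T * eNorm T ≤ C * eNorm T := by rw [hTsq]; exact hfin
    exact le_of_mul_le_mul_right this h0'
end

section
/- Let X be an m×n complex matrix. Then ‖T_X‖ equals the supremum of |Tr((C Δ_n(ξ))ᴴ X)| over all m×n complex matrices C with ‖C‖_∞ ≤ 1 and all ξ ∈ ℂⁿ with ‖ξ‖₂ ≤ 1. -/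
open Matrix BigOperators
open scoped Matrix.Norms.L2Operator

/-- The norm of the bilinear map `T_X : (a, B) ↦ (∑_i a_i X_{ij} B_{ij})_j`, the
supremum over `max_i |a_i| ≤ 1` and `‖B‖_∞ ≤ 1` of `‖T_X(a,B)‖₂`. -/
noncomputable def TxNorm {m n : ℕ} (X : Matrix (Fin m) (Fin n) ℂ) : ℝ :=
  ⨆ p : {p : (Fin m → ℂ) × Matrix (Fin m) (Fin n) ℂ //
      (∀ i, ‖p.1 i‖ ≤ 1) ∧ opNorm p.2 ≤ 1},
    eNorm (fun j => ∑ i, p.1.1 i * X i j * p.1.2 i j)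

lemma eNorm_eq {n : ℕ} (ξ : Fin n → ℂ) :
    eNorm ξ = ‖(WithLp.equiv 2 (Fin n → ℂ)).symm ξ‖ := by
  rw [eNorm, EuclideanSpace.norm_eq]; rfl

lemma eNorm_nonneg {n : ℕ} (ξ : Fin n → ℂ) : 0 ≤ eNorm ξ := Real.sqrt_nonneg _

lemma opNorm_eq {m n : ℕ} (A : Matrix (Fin m) (Fin n) ℂ) : opNorm A = ‖A‖ :=
  (Matrix.l2_opNorm_def A).symm

lemma eNorm_mulVec_le {m n : ℕ} (A : Matrix (Fin m) (Fin n) ℂ) (x : Fin n → ℂ) :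
    eNorm (A.mulVec x) ≤ opNorm A * eNorm x := by
  have h := ((Matrix.toEuclideanLin A).toContinuousLinearMap).le_opNorm
    ((WithLp.equiv 2 (Fin n → ℂ)).symm x)
  simpa [eNorm_eq, opNorm] using h

lemma opNorm_le_bound {m n : ℕ} (A : Matrix (Fin m) (Fin n) ℂ) (c : ℝ) (hc : 0 ≤ c)
    (h : ∀ x : Fin n → ℂ, eNorm (A.mulVec x) ≤ c * eNorm x) : opNorm A ≤ c := by
  apply ContinuousLinearMap.opNorm_le_bound _ hc
  intro x
  simpa [eNorm_eq, Matrix.toEuclideanLin_apply] using h ((WithLp.equiv 2 (Fin n → ℂ)) x)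

lemma entry_le_eNorm {n : ℕ} (v : Fin n → ℂ) (j : Fin n) : ‖v j‖ ≤ eNorm v := by
  rw [eNorm, show ‖v j‖ = Real.sqrt (‖v j‖ ^ 2) by rw [Real.sqrt_sq (norm_nonneg _)]]
  exact Real.sqrt_le_sqrt (Finset.single_le_sum (f := fun k => ‖v k‖ ^ 2)
    (fun k _ => by positivity) (Finset.mem_univ j))

lemma eNorm_single {n : ℕ} (j : Fin n) : eNorm (Pi.single j (1:ℂ)) = 1 := by
  rw [eNorm]
  have h : (∑ k, ‖(Pi.single j 1 : Fin n → ℂ) k‖ ^ 2) = 1 := by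
    rw [Finset.sum_eq_single j]
    · simp
    · intro k _ hk
      simp [Pi.single_apply, hk]
    · simp
  rw [h, Real.sqrt_one]

lemma entry_le_opNorm {m n : ℕ} (A : Matrix (Fin m) (Fin n) ℂ) (i : Fin m) (j : Fin n) :
    ‖A i j‖ ≤ opNorm A := by
  have e : A *ᵥ Pi.single j (1:ℂ) = fun i => A i j := by
    simp [Matrix.mulVec_single]; rfl
  have h1 : ‖A i j‖ ≤ eNorm (A.mulVec (Pi.single j 1)) := by
    have := entry_le_eNorm (A.mulVec (Pi.single j 1)) i
    rw [e] at this ⊢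
    exact this
  calc ‖A i j‖ ≤ eNorm (A.mulVec (Pi.single j 1)) := h1
    _ ≤ opNorm A * eNorm (Pi.single j 1) := eNorm_mulVec_le _ _
    _ = opNorm A := by rw [eNorm_single, mul_one]

lemma opNorm_nonneg {m n : ℕ} (A : Matrix (Fin m) (Fin n) ℂ) : 0 ≤ opNorm A :=
  norm_nonneg _

lemma opNorm_diagonal_le {n : ℕ} (d : Fin n → ℂ) (hd : ∀ i, ‖d i‖ ≤ 1) :
    opNorm (Matrix.diagonal d) ≤ 1 := by
  apply opNorm_le_bound _ 1 zero_le_one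
  intro x
  rw [one_mul, eNorm, eNorm]
  apply Real.sqrt_le_sqrt
  apply Finset.sum_le_sum
  intro j _
  rw [Matrix.mulVec_diagonal, norm_mul, mul_pow]
  calc ‖d j‖^2 * ‖x j‖^2 ≤ 1 * ‖x j‖^2 := by
        apply mul_le_mul_of_nonneg_right _ (by positivity)
        exact pow_le_one₀ (norm_nonneg _) (hd j)
    _ = ‖x j‖^2 := one_mul _

lemma opNorm_conj_le {m n : ℕ} (A : Matrix (Fin m) (Fin n) ℂ) :
    opNorm (A.map (starRingEnd ℂ)) ≤ opNorm A := by
  apply opNorm_le_bound _ _ (opNorm_nonneg A)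
  intro x
  have hmv : (A.map (starRingEnd ℂ)).mulVec x =
      fun i => starRingEnd ℂ ((A.mulVec (fun k => starRingEnd ℂ (x k))) i) := by
    funext i
    simp [Matrix.mulVec, dotProduct, Matrix.map_apply]
  rw [hmv]
  have h1 : eNorm (fun i => starRingEnd ℂ ((A.mulVec (fun k => starRingEnd ℂ (x k))) i)) =
      eNorm (A.mulVec (fun k => starRingEnd ℂ (x k))) := by
    rw [eNorm, eNorm]; simp
  have h2 : eNorm (fun k => starRingEnd ℂ (x k)) = eNorm x := by
    rw [eNorm, eNorm]; simp
  rw [h1, ← h2]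
  exact eNorm_mulVec_le _ _

lemma opNorm_mul_le {m n k : ℕ} (A : Matrix (Fin m) (Fin n) ℂ) (B : Matrix (Fin n) (Fin k) ℂ) :
    opNorm (A * B) ≤ opNorm A * opNorm B := by
  simpa only [opNorm_eq] using Matrix.l2_opNorm_mul A B

lemma cauchy_schwarz' {n : ℕ} (ξ w : Fin n → ℂ) :
    ‖∑ j, starRingEnd ℂ (ξ j) * w j‖ ≤ eNorm ξ * eNorm w := by
  have h := norm_inner_le_norm (𝕜 := ℂ) ((WithLp.equiv 2 (Fin n → ℂ)).symm ξ)
    ((WithLp.equiv 2 (Fin n → ℂ)).symm w)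
  rw [← eNorm_eq, ← eNorm_eq] at h
  have hi : (inner ℂ ((WithLp.equiv 2 (Fin n → ℂ)).symm ξ)
      ((WithLp.equiv 2 (Fin n → ℂ)).symm w) : ℂ) = ∑ j, starRingEnd ℂ (ξ j) * w j := by
    simp [PiLp.inner_apply, RCLike.inner_apply, mul_comm]
  rwa [hi] at h

lemma eNorm_le_sum {n : ℕ} (v : Fin n → ℂ) : eNorm v ≤ ∑ j, ‖v j‖ := by
  rw [eNorm]
  rw [show (∑ j, ‖v j‖) = Real.sqrt ((∑ j, ‖v j‖)^2) by
    rw [Real.sqrt_sq (Finset.sum_nonneg fun j _ => norm_nonneg _)]]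
  exact Real.sqrt_le_sqrt (Finset.sum_sq_le_sq_sum_of_nonneg fun j _ => norm_nonneg _)

lemma eNorm_smul' {n : ℕ} (c : ℂ) (v : Fin n → ℂ) :
    eNorm (fun j => c * v j) = ‖c‖ * eNorm v := by
  simp only [eNorm, norm_mul, mul_pow, ← Finset.mul_sum]
  rw [Real.sqrt_mul (by positivity), Real.sqrt_sq (norm_nonneg c)]

lemma eNorm_zero {n : ℕ} : eNorm (0 : Fin n → ℂ) = 0 := by
  simp [eNorm]

lemma trace_formula {m n : ℕ} (X C : Matrix (Fin m) (Fin n) ℂ) (ξ : Fin n → ℂ) :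
    ((C * Matrix.diagonal ξ)ᴴ * X).trace
      = ∑ j, starRingEnd ℂ (ξ j) * ∑ i, starRingEnd ℂ (C i j) * X i j := by
  rw [Matrix.trace]
  apply Finset.sum_congr rfl
  intro j _
  rw [Matrix.diag_apply, Matrix.mul_apply, Finset.mul_sum]
  apply Finset.sum_congr rfl
  intro i _
  rw [Matrix.conjTranspose_apply, Matrix.mul_diagonal]
  simp only [star_mul', starRingEnd_apply]
  ring

/-- `‖T_X‖` equals the supremum of `|Tr((C Δ_n(ξ))ᴴ X)|` over `‖C‖_∞ ≤ 1` and
`‖ξ‖₂ ≤ 1`. -/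
theorem TxNorm_eq_sup_trace_pairing
    (m n : ℕ) (X : Matrix (Fin m) (Fin n) ℂ) :
    TxNorm X =
      ⨆ q : {q : Matrix (Fin m) (Fin n) ℂ × (Fin n → ℂ) //
          opNorm q.1 ≤ 1 ∧ eNorm q.2 ≤ 1},
        ‖((q.1.1 * Matrix.diagonal q.1.2)ᴴ * X).trace‖ := by
  classical
  set K := ∑ i, ∑ j, ‖X i j‖ with hKdef
  -- bound for the LHS family
  have hb1 : ∀ p : {p : (Fin m → ℂ) × Matrix (Fin m) (Fin n) ℂ //
      (∀ i, ‖p.1 i‖ ≤ 1) ∧ opNorm p.2 ≤ 1},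
      eNorm (fun j => ∑ i, p.1.1 i * X i j * p.1.2 i j) ≤ K := by
    rintro ⟨⟨a, B⟩, ha, hB⟩
    calc eNorm (fun j => ∑ i, a i * X i j * B i j)
        ≤ ∑ j, ‖∑ i, a i * X i j * B i j‖ := eNorm_le_sum _
      _ ≤ ∑ j, ∑ i, ‖X i j‖ := by
          apply Finset.sum_le_sum
          intro j _
          refine (norm_sum_le _ _).trans (Finset.sum_le_sum fun i _ => ?_)
          rw [norm_mul, norm_mul]
          have hBij : ‖B i j‖ ≤ 1 := (entry_le_opNorm B i j).trans hB
          have h1 : ‖(a, B).1 i‖ * ‖X i j‖ ≤ 1 * ‖X i j‖ :=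
            mul_le_mul_of_nonneg_right (ha i) (norm_nonneg _)
          have h2 : ‖a i‖ * ‖X i j‖ * ‖B i j‖ ≤ (1 * ‖X i j‖) * 1 :=
            mul_le_mul h1 hBij (norm_nonneg _) (by positivity)
          simpa using h2
      _ = K := Finset.sum_comm
  -- bound for the RHS family
  have hb2 : ∀ q : {q : Matrix (Fin m) (Fin n) ℂ × (Fin n → ℂ) //
      opNorm q.1 ≤ 1 ∧ eNorm q.2 ≤ 1},
      ‖((q.1.1 * Matrix.diagonal q.1.2)ᴴ * X).trace‖ ≤ K := by
    rintro ⟨⟨C, ξ⟩, hC, hξ⟩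
    rw [trace_formula]
    calc ‖∑ j, starRingEnd ℂ (ξ j) * ∑ i, starRingEnd ℂ (C i j) * X i j‖
        ≤ ∑ j, ∑ i, ‖X i j‖ := by
          refine (norm_sum_le _ _).trans (Finset.sum_le_sum fun j _ => ?_)
          rw [norm_mul]
          have hξj : ‖starRingEnd ℂ (ξ j)‖ ≤ 1 := by
            rw [starRingEnd_apply, norm_star]
            exact (entry_le_eNorm ξ j).trans hξ
          have hin : ‖∑ i, starRingEnd ℂ (C i j) * X i j‖ ≤ ∑ i, ‖X i j‖ := by
            refine (norm_sum_le _ _).trans (Finset.sum_le_sum fun i _ => ?_)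
            rw [norm_mul, starRingEnd_apply, norm_star]
            have h1 : ‖C i j‖ ≤ 1 := (entry_le_opNorm C i j).trans hC
            calc ‖C i j‖ * ‖X i j‖ ≤ 1 * ‖X i j‖ :=
                  mul_le_mul_of_nonneg_right h1 (norm_nonneg _)
              _ = ‖X i j‖ := one_mul _
          calc ‖starRingEnd ℂ (ξ j)‖ * ‖∑ i, starRingEnd ℂ (C i j) * X i j‖
              ≤ 1 * (∑ i, ‖X i j‖) := by
                apply mul_le_mul hξj hin (norm_nonneg _) zero_le_one
            _ = ∑ i, ‖X i j‖ := one_mul _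
      _ = K := Finset.sum_comm
  have hbdd1 : BddAbove (Set.range fun p : {p : (Fin m → ℂ) × Matrix (Fin m) (Fin n) ℂ //
      (∀ i, ‖p.1 i‖ ≤ 1) ∧ opNorm p.2 ≤ 1} =>
      eNorm (fun j => ∑ i, p.1.1 i * X i j * p.1.2 i j)) :=
    ⟨K, by rintro x ⟨p, rfl⟩; exact hb1 p⟩
  have hbdd2 : BddAbove (Set.range fun q : {q : Matrix (Fin m) (Fin n) ℂ × (Fin n → ℂ) //
      opNorm q.1 ≤ 1 ∧ eNorm q.2 ≤ 1} =>
      ‖((q.1.1 * Matrix.diagonal q.1.2)ᴴ * X).trace‖) :=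
    ⟨K, by rintro x ⟨q, rfl⟩; exact hb2 q⟩
  have h0op : opNorm (0 : Matrix (Fin m) (Fin n) ℂ) ≤ 1 := by
    rw [opNorm_eq]
    simp
  haveI hne1 : Nonempty {p : (Fin m → ℂ) × Matrix (Fin m) (Fin n) ℂ //
      (∀ i, ‖p.1 i‖ ≤ 1) ∧ opNorm p.2 ≤ 1} :=
    ⟨⟨(0, 0), fun i => by simp, h0op⟩⟩
  haveI hne2 : Nonempty {q : Matrix (Fin m) (Fin n) ℂ × (Fin n → ℂ) //
      opNorm q.1 ≤ 1 ∧ eNorm q.2 ≤ 1} :=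
    ⟨⟨(0, 0), h0op, by rw [show ((0,0) : Matrix (Fin m) (Fin n) ℂ × (Fin n → ℂ)).2 = 0 from rfl, eNorm_zero]; exact zero_le_one⟩⟩
  apply le_antisymm
  · -- TxNorm X ≤ sup
    rw [TxNorm]
    apply ciSup_le
    rintro ⟨⟨a, B⟩, ha, hB⟩
    set v : Fin n → ℂ := fun j => ∑ i, a i * X i j * B i j with hv
    set r : ℝ := eNorm v with hr
    have hr0 : 0 ≤ r := eNorm_nonneg v
    set ξ : Fin n → ℂ := fun j => ((r⁻¹ : ℝ) : ℂ) * v j with hξdef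
    set C : Matrix (Fin m) (Fin n) ℂ := ((Matrix.diagonal a) * B).map (starRingEnd ℂ) with hCdef
    have hCop : opNorm C ≤ 1 := by
      refine (opNorm_conj_le _).trans ?_
      calc opNorm (Matrix.diagonal a * B) ≤ opNorm (Matrix.diagonal a) * opNorm B :=
            opNorm_mul_le _ _
        _ ≤ 1 * 1 := by
            apply mul_le_mul (opNorm_diagonal_le a ha) hB (opNorm_nonneg _) zero_le_one
        _ = 1 := one_mul 1
    have hξn : eNorm ξ ≤ 1 := by
      rw [hξdef]
      rw [eNorm_smul']
      rw [Complex.norm_real, Real.norm_eq_abs, abs_of_nonneg (inv_nonneg.mpr hr0), ← hr]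
      rcases eq_or_lt_of_le hr0 with h0 | h0
      · rw [← h0]; simp
      · rw [inv_mul_cancel₀ (ne_of_gt h0)]
    have hconjC : ∀ i j, starRingEnd ℂ (C i j) = a i * B i j := by
      intro i j
      rw [hCdef, Matrix.map_apply, Complex.conj_conj, Matrix.diagonal_mul]
    have hval : ‖((C * Matrix.diagonal ξ)ᴴ * X).trace‖ = r := by
      rw [trace_formula]
      have hsum : ∀ j, (∑ i, starRingEnd ℂ (C i j) * X i j) = v j := by
        intro j
        rw [hv]
        refine Finset.sum_congr rfl fun i _ => ?_
        rw [hconjC]; ring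
      have hterm : ∀ j, starRingEnd ℂ (ξ j) * ∑ i, starRingEnd ℂ (C i j) * X i j
          = (((r⁻¹ * ‖v j‖^2 : ℝ)) : ℂ) := by
        intro j
        rw [hsum j, hξdef]
        rw [_root_.map_mul, Complex.conj_ofReal, mul_assoc, RCLike.conj_mul]
        norm_cast
        exact (Complex.ofReal_mul _ _).symm
      rw [Finset.sum_congr rfl fun j _ => hterm j, ← Complex.ofReal_sum,
        Complex.norm_real, ← Finset.mul_sum]
      have hs : (∑ j, ‖v j‖^2) = r^2 := by
        rw [hr, eNorm, Real.sq_sqrt (Finset.sum_nonneg fun j _ => by positivity)]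
      rw [hs, Real.norm_eq_abs, abs_of_nonneg (by positivity)]
      rcases eq_or_lt_of_le hr0 with h0 | h0
      · rw [← h0]; simp
      · field_simp
    show eNorm v ≤ _
    calc eNorm v = ‖((C * Matrix.diagonal ξ)ᴴ * X).trace‖ := hval.symm
      _ ≤ _ := le_ciSup hbdd2 ⟨(C, ξ), hCop, hξn⟩
  · -- sup ≤ TxNorm X
    apply ciSup_le
    rintro ⟨⟨C, ξ⟩, hC, hξ⟩
    set B : Matrix (Fin m) (Fin n) ℂ := C.map (starRingEnd ℂ) with hBdef
    set a : Fin m → ℂ := fun _ => 1 with hadef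
    set w : Fin n → ℂ := fun j => ∑ i, a i * X i j * B i j with hw
    have hwj : ∀ j, w j = ∑ i, starRingEnd ℂ (C i j) * X i j := by
      intro j
      rw [hw]
      refine Finset.sum_congr rfl fun i _ => ?_
      rw [hadef, hBdef, Matrix.map_apply]
      ring
    have hp1 : ∀ i, ‖a i‖ ≤ 1 := fun i => by rw [hadef]; simp
    have hp2 : opNorm B ≤ 1 := (opNorm_conj_le C).trans hC
    calc ‖((C * Matrix.diagonal ξ)ᴴ * X).trace‖
        = ‖∑ j, starRingEnd ℂ (ξ j) * w j‖ := by
          rw [trace_formula]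
          refine congrArg _ (Finset.sum_congr rfl fun j _ => ?_)
          rw [hwj j]
      _ ≤ eNorm ξ * eNorm w := cauchy_schwarz' ξ w
      _ ≤ 1 * eNorm w := mul_le_mul_of_nonneg_right hξ (eNorm_nonneg w)
      _ = eNorm w := one_mul _
      _ ≤ TxNorm X := by
          rw [TxNorm]
          exact le_ciSup hbdd1 ⟨(a, B), hp1, hp2⟩
end
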